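/- Let p = 1 ≤ q < ∞, let v, w be weights on (a,b), and let ε > 0 be such that A_ε < ∞. Then there is a constant c, depending only on q and ε, such that (∫_a^b (∫_a^t f)^q w(t) dt)^{1/q} ≤ c · A_ε · ∫_a^b f v for every f ∈ M⁺(a,b). -/

import Mathlib

open MeasureTheory Set Filter
open scoped ENNReal Topology

/-- The open subinterval of `ℝ` with extended-real endpoints `a` and `b`. -/
def EIoo (a b : EReal) : Set ℝ := {x : ℝ | a < (x : EReal) ∧ (x : EReal) < b}

/-- A weight on `(a,b)`: a measurable function which is positive and finite a.e. on `(a,b)`. -/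
def IsWeight (a b : EReal) (v : ℝ → ℝ≥0∞) : Prop :=
  Measurable v ∧ ∀ᵐ x ∂(volume.restrict (EIoo a b)), v x ≠ 0 ∧ v x ≠ ∞

/-- The function `V` in the case `1 < p`:  `V(t) = (∫_a^t v^{1-p'})^{1/p'}`, `p' = p/(p-1)`. -/
noncomputable def Vp (a : EReal) (p : ℝ) (v : ℝ → ℝ≥0∞) (t : ℝ) : ℝ≥0∞ :=
  (∫⁻ s in EIoo a (t : EReal), v s ^ (1 - p / (p - 1))) ^ ((p - 1) / p)

/-- The function `V` in the case `p = 1`:  `V(t) = ess sup_{s ∈ (a,t)} 1/v(s)`. -/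
noncomputable def V1 (a : EReal) (v : ℝ → ℝ≥0∞) (t : ℝ) : ℝ≥0∞ :=
  essSup (fun s => (v s)⁻¹) (volume.restrict (EIoo a (t : EReal)))

/-- `A_ε = sup_{t ∈ (a,b)} V(t)^{-ε} (∫_a^t V^{q(ε+1)} w)^{1/q}`. -/
noncomputable def Aeps (a b : EReal) (q ε : ℝ) (V w : ℝ → ℝ≥0∞) : ℝ≥0∞ :=
  ⨆ t ∈ EIoo a b,
    V t ^ (-ε) * (∫⁻ s in EIoo a (t : EReal), V s ^ (q * (ε + 1)) * w s) ^ (1 / q)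

/-- `B_{1,ε} = (∫_a^b (∫_a^t V^{q(ε+1)} w)^{r/p} V(t)^{q(ε+1)-εr} w(t) dt)^{1/r}`. -/
noncomputable def B1 (a b : EReal) (p q r ε : ℝ) (V w : ℝ → ℝ≥0∞) : ℝ≥0∞ :=
  (∫⁻ t in EIoo a b,
      (∫⁻ s in EIoo a (t : EReal), V s ^ (q * (ε + 1)) * w s) ^ (r / p) *
        (V t ^ (q * (ε + 1) - ε * r) * w t)) ^ (1 / r)

/-- The weighted Hardy inequality with constant `C`, case `p > 1`
(`RHS = C (∫_a^b f^p v)^{1/p}`). -/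
def HardyP (a b : EReal) (p q : ℝ) (v w : ℝ → ℝ≥0∞) (C : ℝ≥0∞) : Prop :=
  ∀ f : ℝ → ℝ≥0∞, Measurable f →
    (∫⁻ t in EIoo a b, (∫⁻ s in EIoo a (t : EReal), f s) ^ q * w t) ^ (1 / q)
      ≤ C * (∫⁻ x in EIoo a b, f x ^ p * v x) ^ (1 / p)

/-- The weighted Hardy inequality with constant `C`, case `p = 1`
(`RHS = C ∫_a^b f v`). -/
def Hardy1 (a b : EReal) (q : ℝ) (v w : ℝ → ℝ≥0∞) (C : ℝ≥0∞) : Prop :=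
  ∀ f : ℝ → ℝ≥0∞, Measurable f →
    (∫⁻ t in EIoo a b, (∫⁻ s in EIoo a (t : EReal), f s) ^ q * w t) ^ (1 / q)
      ≤ C * ∫⁻ x in EIoo a b, f x * v x

/-- `A_ε < ∞`, including the requirement that every subexpression (in particular
`V(t)` and the inner integral) is finite for every `t ∈ (a,b)`. -/
def AFin (a b : EReal) (q ε : ℝ) (V w : ℝ → ℝ≥0∞) : Prop :=
  (∀ t ∈ EIoo a b,
      V t ≠ ∞ ∧ (∫⁻ s in EIoo a (t : EReal), V s ^ (q * (ε + 1)) * w s) ≠ ∞) ∧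
    Aeps a b q ε V w ≠ ∞

/-- `B_{1,ε} < ∞`, including the requirement that every subexpression (in particular
`V(t)` and the inner integral) is finite for every `t ∈ (a,b)`. -/
def B1Fin (a b : EReal) (p q r ε : ℝ) (V w : ℝ → ℝ≥0∞) : Prop :=
  (∀ t ∈ EIoo a b,
      V t ≠ ∞ ∧ (∫⁻ s in EIoo a (t : EReal), V s ^ (q * (ε + 1)) * w s) ≠ ∞) ∧
    B1 a b p q r ε V w ≠ ∞


section AuxLemmas

lemma EIoo_eq_preimage (a b : EReal) : EIoo a b = ((↑) : ℝ → EReal) ⁻¹' (Set.Ioo a b) := rfl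

lemma measurableSet_EIoo (a b : EReal) : MeasurableSet (EIoo a b) := by
  rw [EIoo_eq_preimage]
  exact measurable_coe_real_ereal measurableSet_Ioo

lemma EIoo_mono_right {a : EReal} {t t' : ℝ} (h : t ≤ t') :
    EIoo a (t : EReal) ⊆ EIoo a (t' : EReal) := fun x hx =>
  ⟨hx.1, lt_of_lt_of_le hx.2 (EReal.coe_le_coe_iff.2 h)⟩

lemma EIoo_subset_EIoo {a b : EReal} {t : ℝ} (ht : (t : EReal) ≤ b) :
    EIoo a (t : EReal) ⊆ EIoo a b := fun x hx => ⟨hx.1, lt_of_lt_of_le hx.2 ht⟩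

lemma V1_mono (a : EReal) (v : ℝ → ℝ≥0∞) : Monotone (V1 a v) := fun t t' h =>
  essSup_mono_measure' (Measure.restrict_mono (EIoo_mono_right h) le_rfl)

lemma V1_measurable (a : EReal) (v : ℝ → ℝ≥0∞) : Measurable (V1 a v) :=
  (V1_mono a v).measurable

lemma exists_real_btwn {a b : EReal} (h : a < b) : ∃ x : ℝ, a < (x : EReal) ∧ (x : EReal) < b := by
  obtain ⟨z, hz1, hz2⟩ := exists_between h
  lift z to ℝ using ⟨ne_top_of_lt hz2, ne_bot_of_gt hz1⟩
  exact ⟨z, hz1, hz2⟩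

lemma EIoo_pos_measure {a : EReal} {t : ℝ} (h : a < (t : EReal)) :
    0 < volume (EIoo a (t : EReal)) := by
  obtain ⟨x, hx1, hx2⟩ := exists_real_btwn h
  have hxt : x < t := EReal.coe_lt_coe_iff.1 hx2
  have hsub : Set.Ioo x t ⊆ EIoo a (t : EReal) := fun y hy =>
    ⟨lt_trans hx1 (EReal.coe_lt_coe_iff.2 hy.1), EReal.coe_lt_coe_iff.2 hy.2⟩
  calc (0 : ℝ≥0∞) < volume (Set.Ioo x t) := by simp [Real.volume_Ioo, hxt]
    _ ≤ _ := measure_mono hsub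

lemma V1_pos {a b : EReal} {v : ℝ → ℝ≥0∞} (hv : IsWeight a b v) {t : ℝ}
    (ht : t ∈ EIoo a b) : 0 < V1 a v t := by
  rw [pos_iff_ne_zero]
  intro h0
  have hle := ae_le_essSup (μ := volume.restrict (EIoo a (t : EReal))) (f := fun s => (v s)⁻¹)
  rw [show essSup (fun s => (v s)⁻¹) (volume.restrict (EIoo a (t : EReal))) = V1 a v t from rfl,
    h0] at hle
  have hne := ae_restrict_of_ae_restrict_of_subset (EIoo_subset_EIoo ht.2.le) hv.2
  have hfalse : ∀ᵐ x ∂(volume.restrict (EIoo a (t : EReal))), False := by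
    filter_upwards [hle, hne] with x h1 h2
    exact h2.2 (ENNReal.inv_eq_zero.1 (le_zero_iff.1 h1))
  have h0' : volume.restrict (EIoo a (t : EReal)) Set.univ = 0 := by
    simpa [ae_iff] using hfalse
  rw [Measure.restrict_apply_univ] at h0'
  exact absurd h0' (EIoo_pos_measure ht.1).ne'

section
variable {a b : EReal} {v g w : ℝ → ℝ≥0∞}

/-- a.e. `s` in `(a,b)`: for every rational `r` with `s < r < b`, `(v s)⁻¹ ≤ V1 a v r`. -/
lemma ae_inv_le_V1 :
    ∀ᵐ s ∂(volume.restrict (EIoo a b)), ∀ r : ℚ, s < (r : ℝ) → ((r : ℝ) : EReal) < b →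
      (v s)⁻¹ ≤ V1 a v (r : ℝ) := by
  rw [ae_all_iff]
  intro r
  have h1 : ∀ᵐ s ∂(volume.restrict (EIoo a ((r : ℝ) : EReal))), (v s)⁻¹ ≤ V1 a v (r : ℝ) :=
    ENNReal.ae_le_essSup _
  have h2 : ∀ᵐ s ∂(volume : Measure ℝ), s ∈ EIoo a ((r : ℝ) : EReal) → (v s)⁻¹ ≤ V1 a v (r : ℝ) :=
    ae_imp_of_ae_restrict h1
  have h3 := ae_restrict_of_ae (s := EIoo a b) h2
  have h4 := ae_restrict_mem (μ := volume) (measurableSet_EIoo a b)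
  filter_upwards [h3, h4] with s hs hsmem hsr _
  exact hs ⟨hsmem.1, EReal.coe_lt_coe_iff.2 hsr⟩

/-- Integral of `g` over an initial-segment-like set is bounded by the bounds on
integrals over `EIoo a u` for `u` in the set. -/
lemma lintegral_initialSeg (hg : Measurable g) {S : Set ℝ} (hS : MeasurableSet S)
    (hSsub : S ⊆ EIoo a b)
    (hSseg : ∀ ⦃x y : ℝ⦄, x ∈ S → a < (y : EReal) → y < x → y ∈ S)
    {D : ℝ≥0∞} (hD : ∀ u ∈ S, ∫⁻ s in EIoo a (u : EReal), g s ≤ D) :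
    ∫⁻ s in S, g s ≤ D := by
  classical
  set μ' := volume.withDensity g with hμ'
  have happ : ∀ {E : Set ℝ}, MeasurableSet E → μ' E = ∫⁻ s in E, g s := fun hE =>
    withDensity_apply g hE
  let ι := {r : ℚ // (r : ℝ) ∈ S}
  let T : Set ℝ := ⋃ r : ι, EIoo a (((r : ℚ) : ℝ) : EReal)
  have hTsub : T ⊆ S := by
    rintro x hx
    obtain ⟨r, hr⟩ := mem_iUnion.1 hx
    exact hSseg r.2 hr.1 (EReal.coe_lt_coe_iff.1 hr.2)
  have hcov : S ⊆ T ∪ {x ∈ S | ∀ y ∈ S, y ≤ x} := by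
    intro x hx
    by_cases hxT : x ∈ T
    · exact Or.inl hxT
    · refine Or.inr ⟨hx, fun y hy => ?_⟩
      by_contra hxy
      push_neg at hxy
      obtain ⟨r, hr1, hr2⟩ := exists_rat_btwn hxy
      have hrS : (r : ℝ) ∈ S :=
        hSseg hy (lt_trans (hSsub hx).1 (EReal.coe_lt_coe_iff.2 hr1)) hr2
      exact hxT (mem_iUnion.2 ⟨⟨r, hrS⟩, ⟨(hSsub hx).1, EReal.coe_lt_coe_iff.2 hr1⟩⟩)
  have hL : μ' {x ∈ S | ∀ y ∈ S, y ≤ x} = 0 := by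
    refine withDensity_absolutelyContinuous volume g ?_
    refine Set.Subsingleton.measure_zero (fun x hx y hy => ?_) volume
    exact le_antisymm (hy.2 x hx.1) (hx.2 y hy.1)
  have hdir : Directed (· ⊆ ·) fun r : ι => EIoo a (((r : ℚ) : ℝ) : EReal) := by
    intro r r'
    rcases le_total (r : ℚ) (r' : ℚ) with h | h
    · exact ⟨r', EIoo_mono_right (by exact_mod_cast h), subset_rfl⟩
    · exact ⟨r, subset_rfl, EIoo_mono_right (by exact_mod_cast h)⟩
  have hT : μ' T ≤ D := by
    rw [hdir.measure_iUnion]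
    refine iSup_le fun r => ?_
    rw [happ (measurableSet_EIoo _ _)]
    exact hD _ r.2
  calc ∫⁻ s in S, g s = μ' S := (happ hS).symm
    _ ≤ μ' T + μ' {x ∈ S | ∀ y ∈ S, y ≤ x} := (measure_mono hcov).trans (measure_union_le _ _)
    _ ≤ D + 0 := by rw [hL]; exact add_le_add hT le_rfl
    _ = D := by rw [add_zero]

/-- Integral of `g` over `(s,b)` bounded via integrals over `(r,b)` for rationals `r`. -/
lemma lintegral_finalSeg {s : ℝ} (hsb : (s : EReal) < b) {D : ℝ≥0∞}
    (hD : ∀ r : ℚ, s < (r : ℝ) → (((r : ℝ)) : EReal) < b →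
      ∫⁻ u in EIoo ((r : ℝ) : EReal) b, g u ≤ D) :
    ∫⁻ u in EIoo (s : EReal) b, g u ≤ D := by
  classical
  set μ' := volume.withDensity g with hμ'
  let ι := {r : ℚ // s < (r : ℝ) ∧ ((r : ℝ) : EReal) < b}
  have hcov : EIoo (s : EReal) b = ⋃ r : ι, EIoo (((r : ℚ) : ℝ) : EReal) b := by
    ext x
    constructor
    · rintro ⟨hx1, hx2⟩
      obtain ⟨r, hr1, hr2⟩ := exists_rat_btwn (EReal.coe_lt_coe_iff.1 hx1)
      exact mem_iUnion.2 ⟨⟨r, hr1, lt_trans (EReal.coe_lt_coe_iff.2 hr2) hx2⟩,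
        EReal.coe_lt_coe_iff.2 hr2, hx2⟩
    · intro hx
      obtain ⟨r, hr⟩ := mem_iUnion.1 hx
      exact ⟨lt_trans (EReal.coe_lt_coe_iff.2 r.2.1) hr.1, hr.2⟩
  have hdir : Directed (· ⊆ ·) fun r : ι => EIoo (((r : ℚ) : ℝ) : EReal) b := by
    intro r r'
    rcases le_total (r : ℚ) (r' : ℚ) with h | h
    · exact ⟨r, subset_rfl, fun x hx => ⟨lt_of_le_of_lt (by exact_mod_cast h) hx.1, hx.2⟩⟩
    · exact ⟨r', fun x hx => ⟨lt_of_le_of_lt (by exact_mod_cast h) hx.1, hx.2⟩, subset_rfl⟩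
  have happ : ∀ {E : Set ℝ}, MeasurableSet E → μ' E = ∫⁻ u in E, g u := fun hE =>
    withDensity_apply g hE
  calc ∫⁻ u in EIoo (s : EReal) b, g u = μ' (EIoo (s : EReal) b) :=
        (happ (measurableSet_EIoo _ _)).symm
    _ = ⨆ r : ι, μ' (EIoo (((r : ℚ) : ℝ) : EReal) b) := by rw [hcov, hdir.measure_iUnion]
    _ ≤ D := iSup_le fun r => by
        rw [happ (measurableSet_EIoo _ _)]
        exact hD _ r.2.1 r.2.2
end

section
variable {a b : EReal} {v w : ℝ → ℝ≥0∞} {q ε : ℝ}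

lemma two_rpow_ne_zero {x : ℝ} : (2:ℝ≥0∞) ^ x ≠ 0 :=
  (ENNReal.rpow_pos (by norm_num) (by norm_num)).ne'

lemma two_rpow_ne_top {x : ℝ≥0∞} : True := trivial

lemma tail_bound (hq : 1 ≤ q) (hε : 0 < ε) (hv : IsWeight a b v) (hw : Measurable w)
    (hVfin : ∀ u ∈ EIoo a b, V1 a v u ≠ ∞) {t : ℝ} (ht : t ∈ EIoo a b) :
    ∫⁻ u in EIoo (t : EReal) b, w u ≤
      (Aeps a b q ε (V1 a v) w) ^ q * (2 ^ (q * ε) * 2) * ((V1 a v t) ^ q)⁻¹ := by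
  classical
  have hq0 : (0:ℝ) < q := lt_of_lt_of_le one_pos hq
  set A := Aeps a b q ε (V1 a v) w with hA
  set Q := q * (ε + 1) with hQdef
  have hQ0 : (0:ℝ) < Q := by positivity
  have hqε : (0:ℝ) ≤ q * ε := by positivity
  set V := V1 a v with hV
  have hVt0 : V t ≠ 0 := (V1_pos hv ht).ne'
  have hVtT : V t ≠ ∞ := hVfin t ht
  set g : ℝ → ℝ≥0∞ := fun s => V s ^ Q * w s with hg
  have hgm : Measurable g := ((V1_measurable a v).pow_const Q).mul hw
  -- the A_ε condition
  have hWb : ∀ u ∈ EIoo a b, ∫⁻ s in EIoo a (u:EReal), g s ≤ A ^ q * V u ^ (q*ε) := by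
    intro u hu
    have hVu0 : V u ≠ 0 := (V1_pos hv hu).ne'
    have hVuT : V u ≠ ∞ := hVfin u hu
    have h1 : V u ^ (-ε) * (∫⁻ s in EIoo a (u:EReal), g s) ^ (1/q) ≤ A := by
      rw [hA, hV, hg]
      exact le_biSup (fun t => V1 a v t ^ (-ε) *
        (∫⁻ s in EIoo a (t : EReal), V1 a v s ^ (q * (ε + 1)) * w s) ^ (1 / q)) hu
    have h2 : (∫⁻ s in EIoo a (u:EReal), g s) ^ (1/q) ≤ V u ^ ε * A := by
      calc (∫⁻ s in EIoo a (u:EReal), g s) ^ (1/q)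
          = V u ^ ε * (V u ^ (-ε) * (∫⁻ s in EIoo a (u:EReal), g s) ^ (1/q)) := by
            rw [← mul_assoc, ← ENNReal.rpow_add _ _ hVu0 hVuT, add_neg_cancel,
              ENNReal.rpow_zero, one_mul]
        _ ≤ V u ^ ε * A := mul_le_mul_right h1 _
    calc ∫⁻ s in EIoo a (u:EReal), g s
        = ((∫⁻ s in EIoo a (u:EReal), g s) ^ (1/q)) ^ q := by
          rw [← ENNReal.rpow_mul, one_div_mul_cancel hq0.ne', ENNReal.rpow_one]
      _ ≤ (V u ^ ε * A) ^ q := ENNReal.rpow_le_rpow h2 hq0.le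
      _ = A ^ q * V u ^ (q*ε) := by
          rw [ENNReal.mul_rpow_of_nonneg _ _ hq0.le, ← ENNReal.rpow_mul, mul_comm ε q, mul_comm]
  -- dyadic decomposition
  set c : ℕ → ℝ≥0∞ := fun j => (2:ℝ≥0∞) ^ ((j:ℕ):ℝ) * V t with hc
  have hc0 : ∀ j, c j ≠ 0 := fun j => mul_ne_zero two_rpow_ne_zero hVt0
  have hcT : ∀ j, c j ≠ ∞ := fun j =>
    ENNReal.mul_ne_top (ENNReal.rpow_ne_top_of_nonneg (Nat.cast_nonneg j) (by norm_num)) hVtT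
  have hcmono : Monotone c := fun m m' h =>
    mul_le_mul_left (ENNReal.rpow_le_rpow_of_exponent_le one_le_two (by exact_mod_cast h)) _
  set I : ℕ → Set ℝ := fun j => EIoo (t:EReal) b ∩ V ⁻¹' (Set.Ico (c j) (c (j+1))) with hI
  have hImeas : ∀ j, MeasurableSet (I j) := fun j =>
    (measurableSet_EIoo _ _).inter ((V1_measurable a v) measurableSet_Ico)
  have hcov : EIoo (t:EReal) b = ⋃ j, I j := by
    apply Subset.antisymm
    · intro s hs
      have hts : t < s := EReal.coe_lt_coe_iff.1 hs.1
      have hsab : s ∈ EIoo a b := ⟨lt_trans ht.1 hs.1, hs.2⟩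
      have hVts : V t ≤ V s := V1_mono a v hts.le
      have hVsT : V s ≠ ∞ := hVfin s hsab
      obtain ⟨n, hn⟩ := ENNReal.exists_nat_gt (ENNReal.div_lt_top hVsT hVt0).ne
      have hn2 : V s < c n := by
        have h2n : (n:ℝ≥0∞) ≤ 2 ^ ((n:ℕ):ℝ) := by
          rw [ENNReal.rpow_natCast]
          exact_mod_cast (Nat.lt_two_pow_self (n := n)).le
        have hlt : V s / V t < 2 ^ ((n:ℕ):ℝ) := lt_of_lt_of_le hn h2n
        rw [ENNReal.div_lt_iff (Or.inl hVt0) (Or.inl hVtT)] at hlt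
        exact hlt
      have hex : ∃ k, V s < c (k+1) := ⟨n, lt_of_lt_of_le hn2 (hcmono (Nat.le_succ n))⟩
      have hk1 : V s < c (Nat.find hex + 1) := Nat.find_spec hex
      have hk2 : c (Nat.find hex) ≤ V s := by
        rcases Nat.eq_zero_or_pos (Nat.find hex) with h0 | hpos
        · rw [h0]
          simpa [hc] using hVts
        · obtain ⟨m, hm⟩ := Nat.exists_eq_succ_of_ne_zero hpos.ne'
          have hmin := Nat.find_min hex (by rw [hm]; exact Nat.lt_succ_self m)
          rw [hm]
          exact not_lt.1 hmin
      exact mem_iUnion.2 ⟨Nat.find hex, hs, hk2, hk1⟩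
    · exact iUnion_subset fun j => inter_subset_left
  have hdisj : Pairwise (Function.onFun Disjoint I) := by
    intro i j hij
    rcases lt_or_gt_of_ne hij with h | h
    · refine Set.disjoint_left.2 fun s hsi hsj => ?_
      exact absurd (lt_of_lt_of_le hsi.2.2 (le_trans (hcmono h) hsj.2.1)) (lt_irrefl _)
    · refine Set.disjoint_left.2 fun s hsi hsj => ?_
      exact absurd (lt_of_lt_of_le hsj.2.2 (le_trans (hcmono h) hsi.2.1)) (lt_irrefl _)
  -- per-term bound
  have hterm : ∀ j, ∫⁻ u in I j, w u ≤
      (A ^ q * 2 ^ (q*ε) * ((V t)^q)⁻¹) * ((2:ℝ≥0∞) ^ (-q)) ^ (j:ℕ) := by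
    intro j
    have hcjQ0 : c j ^ Q ≠ 0 := by
      simp [ENNReal.rpow_eq_zero_iff, hc0 j, hcT j, hQ0, hQ0.ne', not_lt.2 hQ0.le]
    have hcjQT : c j ^ Q ≠ ∞ := ENNReal.rpow_ne_top_of_nonneg hQ0.le (hcT j)
    have hstep1 : ∫⁻ u in I j, w u ≤ (c j ^ Q)⁻¹ * ∫⁻ u in I j, g u := by
      rw [← lintegral_const_mul _ hgm]
      refine setLIntegral_mono (measurable_const.mul hgm) fun s hs => ?_
      have h1 : c j ^ Q * w s ≤ g s :=
        mul_le_mul_left (ENNReal.rpow_le_rpow hs.2.1 hQ0.le) _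
      calc w s = (c j ^ Q)⁻¹ * (c j ^ Q * w s) := by
            rw [← mul_assoc, ENNReal.inv_mul_cancel hcjQ0 hcjQT, one_mul]
        _ ≤ (c j ^ Q)⁻¹ * g s := mul_le_mul_right h1 _
    have hstep2 : ∫⁻ u in I j, g u ≤ A ^ q * c (j+1) ^ (q*ε) := by
      have hsub : I j ⊆ {s | s ∈ EIoo a b ∧ V s < c (j+1)} := fun s hs =>
        ⟨⟨lt_trans ht.1 hs.1.1, hs.1.2⟩, hs.2.2⟩
      refine le_trans (lintegral_mono_set hsub) ?_
      have hSmeas : MeasurableSet {s | s ∈ EIoo a b ∧ V s < c (j+1)} := by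
        have : {s | s ∈ EIoo a b ∧ V s < c (j+1)} = EIoo a b ∩ V ⁻¹' (Set.Iio (c (j+1))) := rfl
        rw [this]
        exact (measurableSet_EIoo _ _).inter ((V1_measurable a v) measurableSet_Iio)
      refine lintegral_initialSeg hgm hSmeas (fun s hs => hs.1) ?_ ?_
      · intro x y hx hay hyx
        exact ⟨⟨hay, lt_trans (EReal.coe_lt_coe_iff.2 hyx) hx.1.2⟩,
          lt_of_le_of_lt (V1_mono a v hyx.le) hx.2⟩
      · intro u hu
        refine le_trans (hWb u hu.1) (mul_le_mul_right ?_ _)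
        exact ENNReal.rpow_le_rpow hu.2.le hqε
    have halg : (c j ^ Q)⁻¹ * (A ^ q * c (j+1) ^ (q*ε)) =
        (A ^ q * 2 ^ (q*ε) * ((V t)^q)⁻¹) * ((2:ℝ≥0∞) ^ (-q)) ^ (j:ℕ) := by
      have e1 : c (j+1) = 2 * c j := by
        rw [hc]
        push_cast
        rw [ENNReal.rpow_add _ _ (by norm_num) (by norm_num), ← mul_assoc,
          ENNReal.rpow_one, mul_comm ((2:ℝ≥0∞) ^ ((j:ℕ):ℝ)) 2, mul_assoc]
      have e2 : c (j+1) ^ (q*ε) = 2 ^ (q*ε) * c j ^ (q*ε) := by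
        rw [e1, ENNReal.mul_rpow_of_nonneg _ _ hqε]
      have e3 : (c j ^ Q)⁻¹ = c j ^ (-Q) := (ENNReal.rpow_neg _ _).symm
      have e4 : c j ^ (-Q) * c j ^ (q*ε) = c j ^ (-q) := by
        rw [← ENNReal.rpow_add _ _ (hc0 j) (hcT j)]
        congr 1; rw [hQdef]; ring
      have e5 : c j ^ (-q) = ((2:ℝ≥0∞) ^ (-q)) ^ (j:ℕ) * ((V t)^q)⁻¹ := by
        rw [hc, ENNReal.mul_rpow_of_ne_top
          (ENNReal.rpow_ne_top_of_nonneg (Nat.cast_nonneg j) (by norm_num)) hVtT,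
          ← ENNReal.rpow_natCast ((2:ℝ≥0∞) ^ (-q)) j, ← ENNReal.rpow_mul, ← ENNReal.rpow_mul,
          ENNReal.rpow_neg (V t) q, mul_comm (-q) ((j:ℕ):ℝ)]
      calc (c j ^ Q)⁻¹ * (A ^ q * c (j+1) ^ (q*ε))
          = A ^ q * 2 ^ (q*ε) * (c j ^ (-Q) * c j ^ (q*ε)) := by
            rw [e2, e3]; ring
        _ = A ^ q * 2 ^ (q*ε) * (((2:ℝ≥0∞) ^ (-q)) ^ (j:ℕ) * ((V t)^q)⁻¹) := by
            rw [e4, e5]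
        _ = (A ^ q * 2 ^ (q*ε) * ((V t)^q)⁻¹) * ((2:ℝ≥0∞) ^ (-q)) ^ (j:ℕ) := by ring
    calc ∫⁻ u in I j, w u ≤ (c j ^ Q)⁻¹ * (A ^ q * c (j+1) ^ (q*ε)) :=
          le_trans hstep1 (mul_le_mul_right hstep2 _)
      _ = _ := halg
  -- summation
  have hgeom : ∑' j : ℕ, ((2:ℝ≥0∞) ^ (-q)) ^ (j:ℕ) ≤ 2 := by
    rw [ENNReal.tsum_geometric]
    have h1 : (2:ℝ≥0∞) ^ (-q) ≤ 2⁻¹ := by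
      have := ENNReal.rpow_le_rpow_of_exponent_le (x := 2) one_le_two (neg_le_neg hq)
      rwa [ENNReal.rpow_neg_one] at this
    have h2 : (1:ℝ≥0∞) - 2⁻¹ ≤ 1 - (2:ℝ≥0∞) ^ (-q) := tsub_le_tsub_left h1 1
    rw [ENNReal.one_sub_inv_two] at h2
    calc (1 - (2:ℝ≥0∞) ^ (-q))⁻¹ ≤ (2⁻¹:ℝ≥0∞)⁻¹ := ENNReal.inv_le_inv' h2
      _ = 2 := by rw [inv_inv]
  calc ∫⁻ u in EIoo (t : EReal) b, w u = ∑' j, ∫⁻ u in I j, w u := by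
        rw [hcov, lintegral_iUnion hImeas hdisj]
    _ ≤ ∑' j : ℕ, (A ^ q * 2 ^ (q*ε) * ((V t)^q)⁻¹) * ((2:ℝ≥0∞) ^ (-q)) ^ (j:ℕ) :=
        ENNReal.tsum_le_tsum hterm
    _ = (A ^ q * 2 ^ (q*ε) * ((V t)^q)⁻¹) * ∑' j : ℕ, ((2:ℝ≥0∞) ^ (-q)) ^ (j:ℕ) :=
        ENNReal.tsum_mul_left
    _ ≤ (A ^ q * 2 ^ (q*ε) * ((V t)^q)⁻¹) * 2 := mul_le_mul_right hgeom _
    _ = A ^ q * (2 ^ (q*ε) * 2) * ((V t)^q)⁻¹ := by ring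
end

lemma rpow_split {q : ℝ} (hq0 : 0 < q) {x : ℝ≥0∞} (hx : x ≠ ∞) :
    x ^ q = x ^ (q - 1) * x := by
  rcases eq_or_ne x 0 with rfl | h0
  · rw [ENNReal.zero_rpow_of_pos hq0, mul_zero]
  · conv_lhs => rw [show q = (q-1) + 1 by ring]
    rw [ENNReal.rpow_add _ _ h0 hx, ENNReal.rpow_one]

lemma minkowski_hardy {a b : EReal} {q : ℝ} (hq : 1 ≤ q)
    {f w : ℝ → ℝ≥0∞} (hf : Measurable f) (hw : Measurable w)
    (hwfin : ∀ᵐ t ∂(volume.restrict (EIoo a b)), w t ≠ ∞) :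
    (∫⁻ t in EIoo a b, (∫⁻ s in EIoo a (t:EReal), f s) ^ q * w t) ^ (1/q) ≤
      ∫⁻ s in EIoo a b, f s * (∫⁻ u in EIoo (s:EReal) b, w u) ^ (1/q) := by
  classical
  have hq0 : (0:ℝ) < q := lt_of_lt_of_le one_pos hq
  set Φ : ℝ → ℝ≥0∞ := fun t => ∫⁻ s in EIoo a (t:EReal), f s with hΦ
  have hΦmono : Monotone Φ := fun t t' h => lintegral_mono_set (EIoo_mono_right h)
  have hΦm : Measurable Φ := hΦmono.measurable
  set E : Set ℝ := EIoo a b with hE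
  have hEm : MeasurableSet E := measurableSet_EIoo a b
  set Wbar : ℝ → ℝ≥0∞ := fun s => ∫⁻ u in EIoo (s:EReal) b, w u with hWbar
  have hWbaranti : Antitone Wbar := fun s s' h =>
    lintegral_mono_set (fun u hu => ⟨lt_of_le_of_lt (EReal.coe_le_coe_iff.2 h) hu.1, hu.2⟩)
  have hWbarm : Measurable Wbar := hWbaranti.measurable
  set J : ℝ≥0∞ := ∫⁻ s in E, f s * (Wbar s) ^ (1/q) with hJ
  set En : ℕ → Set ℝ := fun n => E ∩ Set.Ioo (-(n:ℝ)) n ∩ {t | w t ≤ (n:ℝ≥0∞)} with hEn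
  have hEnm : ∀ n, MeasurableSet (En n) := fun n =>
    (hEm.inter measurableSet_Ioo).inter (hw measurableSet_Iic)
  have hEnE : ∀ n, En n ⊆ E := fun n => inter_subset_left.trans inter_subset_left
  set ν : ℕ → Measure ℝ := fun n => (volume.restrict (En n)).withDensity w with hν
  have hνapp : ∀ n, ∀ {S : Set ℝ}, MeasurableSet S → ν n S = ∫⁻ u in S ∩ En n, w u := by
    intro n S hS
    rw [hν, withDensity_apply _ hS, Measure.restrict_restrict hS]
  have hνfin : ∀ n, IsFiniteMeasure (ν n) := by
    intro n
    constructor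
    rw [hνapp n MeasurableSet.univ, Set.univ_inter]
    calc ∫⁻ u in En n, w u ≤ ∫⁻ _ in En n, (n:ℝ≥0∞) :=
          setLIntegral_mono' (hEnm n) (fun t ht => ht.2)
      _ = (n:ℝ≥0∞) * volume (En n) := by rw [setLIntegral_const, mul_comm]
      _ ≤ (n:ℝ≥0∞) * volume (Set.Ioo (-(n:ℝ)) n) :=
          mul_le_mul_right (measure_mono (inter_subset_left.trans inter_subset_right)) _
      _ < ∞ := by
          rw [Real.volume_Ioo]
          exact ENNReal.mul_lt_top (ENNReal.natCast_lt_top n) ENNReal.ofReal_lt_top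
  set It : ℕ → ℝ≥0∞ := fun n => ∫⁻ t, (min (Φ t) n) ^ q ∂(ν n) with hIt
  have hminm : ∀ n : ℕ, Measurable (fun t => (min (Φ t) (n:ℝ≥0∞))) := fun n =>
    hΦm.min measurable_const
  have hminT : ∀ n : ℕ, ∀ t, min (Φ t) (n:ℝ≥0∞) ≠ ∞ := fun n t =>
    ne_top_of_le_ne_top (ENNReal.natCast_ne_top n) (min_le_right _ _)
  have hItfin : ∀ n, It n ≠ ∞ := by
    intro n
    have hb : It n ≤ ((n:ℝ≥0∞)) ^ q * (ν n) Set.univ := by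
      rw [hIt]
      calc ∫⁻ t, (min (Φ t) n) ^ q ∂(ν n) ≤ ∫⁻ _, ((n:ℝ≥0∞)) ^ q ∂(ν n) :=
            lintegral_mono fun t => ENNReal.rpow_le_rpow (min_le_right _ _) hq0.le
        _ = ((n:ℝ≥0∞)) ^ q * (ν n) Set.univ := lintegral_const _
    refine ne_top_of_le_ne_top ?_ hb
    exact (ENNReal.mul_lt_top
      (ENNReal.rpow_lt_top_of_nonneg hq0.le (ENNReal.natCast_ne_top n))
      (hνfin n).measure_univ_lt_top).ne
  -- key inequality
  have hkey : ∀ n, It n ≤ J * (It n) ^ (1 - 1/q) := by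
    intro n
    have hfincast : IsFiniteMeasure (ν n) := hνfin n
    -- Hölder bound for the inner integral
    have hinner : ∀ s : ℝ,
        (∫⁻ t, (min (Φ t) n) ^ (q-1) * (Set.Ioi s).indicator (1 : ℝ → ℝ≥0∞) t ∂(ν n)) ≤
          ((ν n) (Set.Ioi s)) ^ (1/q) * (It n) ^ (1 - 1/q) := by
      intro s
      rcases eq_or_lt_of_le hq with hq1 | hq1
      · simp only [← hq1, sub_self, ENNReal.rpow_zero, one_mul, mul_one, one_div_one,
          ENNReal.rpow_one]
        rw [lintegral_indicator_one measurableSet_Ioi]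
      · have hconj : q.HolderConjugate (q/(q-1)) := Real.HolderConjugate.conjExponent hq1
        have hHold := ENNReal.lintegral_mul_le_Lp_mul_Lq (ν n) hconj
          (f := fun t => (Set.Ioi s).indicator (1 : ℝ → ℝ≥0∞) t)
          (g := fun t => (min (Φ t) n) ^ (q-1))
          ((measurable_const.indicator measurableSet_Ioi).aemeasurable)
          (((hminm n).pow_const (q-1)).aemeasurable)
        have e1 : (∫⁻ t, (min (Φ t) n) ^ (q-1) *
            (Set.Ioi s).indicator (1 : ℝ → ℝ≥0∞) t ∂(ν n)) =
            ∫⁻ t, ((fun t => (Set.Ioi s).indicator (1 : ℝ → ℝ≥0∞) t) *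
              (fun t => (min (Φ t) n) ^ (q-1))) t ∂(ν n) := by
          refine lintegral_congr fun t => ?_
          simp [mul_comm]
        have e2 : (∫⁻ t, ((Set.Ioi s).indicator (1 : ℝ → ℝ≥0∞) t) ^ q ∂(ν n)) =
            (ν n) (Set.Ioi s) := by
          rw [← lintegral_indicator_one (μ := ν n) measurableSet_Ioi]
          refine lintegral_congr fun t => ?_
          by_cases hts : t ∈ Set.Ioi s
          · simp [hts]
          · simp [hts, ENNReal.zero_rpow_of_pos hq0]
        have e3 : (∫⁻ t, ((min (Φ t) n) ^ (q-1)) ^ (q/(q-1)) ∂(ν n)) = It n := by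
          rw [hIt]
          refine lintegral_congr fun t => ?_
          rw [← ENNReal.rpow_mul, hconj.sub_one_mul_conj]
        have e4 : 1/(q/(q-1)) = 1 - 1/q := by
          rw [one_div_div]
          field_simp
        rw [e1]
        refine le_trans hHold ?_
        rw [e2, e3, e4]
    -- ν n is carried by En n
    have hνae : ∀ᵐ t ∂(ν n), t ∈ En n := by
      rw [ae_iff]
      have : {t | ¬ t ∈ En n} = (En n)ᶜ := rfl
      rw [this, hνapp n (hEnm n).compl, Set.compl_inter_self]
      simp
    -- identify Φ with an integral over E, ν n-a.e.
    have hEt : ∀ t, t ∈ E → EIoo a (t:EReal) = E ∩ Set.Iio t := by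
      intro t ht
      ext x
      constructor
      · intro hx
        exact ⟨⟨hx.1, lt_trans hx.2 ht.2⟩, EReal.coe_lt_coe_iff.1 hx.2⟩
      · intro hx
        exact ⟨hx.1.1, EReal.coe_lt_coe_iff.2 hx.2⟩
    have hΦrep : ∀ t, t ∈ E → Φ t = ∫⁻ s in E, (Set.Iio t).indicator f s := by
      intro t ht
      rw [hΦ]
      simp only []
      rw [lintegral_indicator measurableSet_Iio, Measure.restrict_restrict measurableSet_Iio,
        hEt t ht, Set.inter_comm]
    -- step 1: peel one power
    have hstep1 : It n ≤ ∫⁻ t, (min (Φ t) n) ^ (q-1) * Φ t ∂(ν n) := by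
      rw [hIt]
      refine lintegral_mono fun t => ?_
      rw [rpow_split hq0 (hminT n t)]
      exact mul_le_mul_right (min_le_left _ _) _
    -- step 2: rewrite with the indicator representation and swap
    have hstep2 : (∫⁻ t, (min (Φ t) n) ^ (q-1) * Φ t ∂(ν n)) =
        ∫⁻ s in E, f s * (∫⁻ t, (min (Φ t) n) ^ (q-1) *
          (Set.Ioi s).indicator (1 : ℝ → ℝ≥0∞) t ∂(ν n)) := by
      have h1 : (∫⁻ t, (min (Φ t) n) ^ (q-1) * Φ t ∂(ν n)) =
          ∫⁻ t, (∫⁻ s in E, (min (Φ t) n) ^ (q-1) * (Set.Iio t).indicator f s) ∂(ν n) := by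
        apply lintegral_congr_ae
        filter_upwards [hνae] with t ht
        rw [hΦrep t (hEnE n ht), lintegral_const_mul _ (hf.indicator measurableSet_Iio)]
      have hGm : AEMeasurable (Function.uncurry fun (t s : ℝ) =>
          (min (Φ t) n) ^ (q-1) * (Set.Iio t).indicator f s) ((ν n).prod (volume.restrict E)) := by
        refine Measurable.aemeasurable ?_
        have hind : (fun p : ℝ × ℝ => (Set.Iio p.1).indicator f p.2) =
            fun p : ℝ × ℝ => if p.2 < p.1 then f p.2 else 0 := by
          ext p
          rw [Set.indicator_apply]
          simp [Set.mem_Iio]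
        refine Measurable.mul ?_ ?_
        · exact (((hminm n).comp measurable_fst).pow_const (q-1))
        · show Measurable fun p : ℝ × ℝ => (Set.Iio p.1).indicator f p.2
          rw [hind]
          exact Measurable.ite (measurableSet_lt measurable_snd measurable_fst)
            (hf.comp measurable_snd) measurable_const
      rw [h1]
      refine Eq.trans (lintegral_lintegral_swap hGm) ?_
      refine lintegral_congr fun s => ?_
      have h3 : ∀ t : ℝ, (min (Φ t) n) ^ (q-1) * (Set.Iio t).indicator f s =
          f s * ((min (Φ t) n) ^ (q-1) * (Set.Ioi s).indicator (1 : ℝ → ℝ≥0∞) t) := by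
        intro t
        rw [Set.indicator_apply, Set.indicator_apply]
        simp only [Set.mem_Iio, Set.mem_Ioi]
        by_cases hst : s < t
        · simp only [if_pos hst, Pi.one_apply, mul_one]
          ring
        · simp only [if_neg hst]
          simp
      calc (∫⁻ t, (min (Φ t) n) ^ (q-1) * (Set.Iio t).indicator f s ∂(ν n)) =
          ∫⁻ t, f s * ((min (Φ t) n) ^ (q-1) *
            (Set.Ioi s).indicator (1 : ℝ → ℝ≥0∞) t) ∂(ν n) :=
            lintegral_congr fun t => h3 t
        _ = f s * ∫⁻ t, (min (Φ t) n) ^ (q-1) *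
              (Set.Ioi s).indicator (1 : ℝ → ℝ≥0∞) t ∂(ν n) :=
            lintegral_const_mul _ (((hminm n).pow_const (q-1)).mul
              (measurable_const.indicator measurableSet_Ioi))
    -- step 3: apply the inner bound and pull out constants
    have hνanti : Antitone fun s => (ν n) (Set.Ioi s) := fun s s' h =>
      measure_mono (Set.Ioi_subset_Ioi h)
    have hstep3 : (∫⁻ s in E, f s * (∫⁻ t, (min (Φ t) n) ^ (q-1) *
          (Set.Ioi s).indicator (1 : ℝ → ℝ≥0∞) t ∂(ν n))) ≤
        (∫⁻ s in E, f s * ((ν n) (Set.Ioi s)) ^ (1/q)) * (It n) ^ (1 - 1/q) := by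
      rw [← lintegral_mul_const' _ _ (ENNReal.rpow_ne_top_of_nonneg
        (by rw [sub_nonneg, div_le_one hq0]; exact hq) (hItfin n))]
      refine lintegral_mono fun s => ?_
      calc f s * (∫⁻ t, (min (Φ t) n) ^ (q-1) *
            (Set.Ioi s).indicator (1 : ℝ → ℝ≥0∞) t ∂(ν n)) ≤
          f s * (((ν n) (Set.Ioi s)) ^ (1/q) * (It n) ^ (1 - 1/q)) :=
            mul_le_mul_right (hinner s) _
        _ = f s * ((ν n) (Set.Ioi s)) ^ (1/q) * (It n) ^ (1 - 1/q) := by ring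
    -- step 4: compare with J
    have hstep4 : (∫⁻ s in E, f s * ((ν n) (Set.Ioi s)) ^ (1/q)) ≤ J := by
      rw [hJ]
      refine lintegral_mono fun s => mul_le_mul_right (ENNReal.rpow_le_rpow ?_ (by positivity)) _
      rw [hνapp n measurableSet_Ioi]
      refine lintegral_mono_set fun u hu => ?_
      exact ⟨EReal.coe_lt_coe_iff.2 hu.1, ((hEnE n) hu.2).2⟩
    calc It n ≤ ∫⁻ t, (min (Φ t) n) ^ (q-1) * Φ t ∂(ν n) := hstep1
      _ = _ := hstep2
      _ ≤ (∫⁻ s in E, f s * ((ν n) (Set.Ioi s)) ^ (1/q)) * (It n) ^ (1 - 1/q) := hstep3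
      _ ≤ J * (It n) ^ (1 - 1/q) := mul_le_mul_left hstep4 _
  -- deduce It n ≤ J ^ q
  have hIq : ∀ n, It n ≤ J ^ q := by
    intro n
    rcases eq_or_ne (It n) 0 with h0 | h0
    · rw [h0]; exact zero_le
    have hc0 : (It n) ^ (1 - 1/q) ≠ 0 := by
      simp [ENNReal.rpow_eq_zero_iff, h0, hItfin n]
    have hcT : (It n) ^ (1 - 1/q) ≠ ∞ :=
      ENNReal.rpow_ne_top_of_nonneg (by rw [sub_nonneg, div_le_one hq0]; exact hq) (hItfin n)
    have h1 : (It n) ^ (1/q) ≤ J := by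
      rw [← ENNReal.mul_le_mul_iff_left hc0 hcT, ← ENNReal.rpow_add _ _ h0 (hItfin n)]
      calc (It n) ^ (1/q + (1 - 1/q)) = It n := by
            rw [show 1/q + (1 - 1/q) = 1 by ring, ENNReal.rpow_one]
        _ ≤ J * (It n) ^ (1 - 1/q) := hkey n
    calc It n = ((It n) ^ (1/q)) ^ q := by
          rw [← ENNReal.rpow_mul, one_div_mul_cancel hq0.ne', ENNReal.rpow_one]
      _ ≤ J ^ q := ENNReal.rpow_le_rpow h1 hq0.le
  -- monotone convergence
  set ψ : ℕ → ℝ → ℝ≥0∞ := fun n t => (En n).indicator (fun t => (min (Φ t) n) ^ q * w t) t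
    with hψ
  have hψm : ∀ n, Measurable (ψ n) := fun n =>
    (((hminm n).pow_const q).mul hw).indicator (hEnm n)
  have hEnmono : Monotone En := by
    intro n m hnm
    refine inter_subset_inter (inter_subset_inter subset_rfl ?_) ?_
    · exact Set.Ioo_subset_Ioo (neg_le_neg (by exact_mod_cast hnm)) (by exact_mod_cast hnm)
    · intro t ht
      show w t ≤ ((m:ℕ) : ℝ≥0∞)
      exact le_trans ht (by exact_mod_cast hnm)
  have hψmono : Monotone ψ := by
    intro n m hnm t
    show (En n).indicator (fun t => (min (Φ t) n) ^ q * w t) t ≤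
      (En m).indicator (fun t => (min (Φ t) m) ^ q * w t) t
    by_cases ht : t ∈ En n
    · rw [Set.indicator_of_mem ht, Set.indicator_of_mem (hEnmono hnm ht)]
      refine mul_le_mul_left (ENNReal.rpow_le_rpow ?_ hq0.le) _
      exact min_le_min le_rfl (by exact_mod_cast hnm)
    · rw [Set.indicator_of_notMem ht]
      exact zero_le
  have hItψ : ∀ n, It n = ∫⁻ t in E, ψ n t := by
    intro n
    show (∫⁻ t, (min (Φ t) n) ^ q ∂((volume.restrict (En n)).withDensity w)) =
      ∫⁻ t in E, (En n).indicator (fun t => (min (Φ t) n) ^ q * w t) t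
    rw [lintegral_withDensity_eq_lintegral_mul _ hw ((hminm n).pow_const q)]
    rw [lintegral_indicator (hEnm n), Measure.restrict_restrict (hEnm n),
      Set.inter_eq_self_of_subset_left (hEnE n)]
    refine lintegral_congr fun t => ?_
    simp [mul_comm]
  have hsup : (∫⁻ t in E, Φ t ^ q * w t) ≤ ⨆ n, It n := by
    have hae : ∀ᵐ t ∂(volume.restrict E), Φ t ^ q * w t ≤ ⨆ n, ψ n t := by
      filter_upwards [hwfin, ae_restrict_mem hEm] with t hwt htE
      obtain ⟨n₀, hn₀⟩ := exists_nat_gt |t|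
      obtain ⟨n₁, hn₁⟩ := ENNReal.exists_nat_gt hwt
      have hmem : ∀ m : ℕ, n₀ + n₁ ≤ m → t ∈ En m := by
        intro m hm
        refine ⟨⟨htE, ?_, ?_⟩, ?_⟩
        · have : |t| < (m:ℝ) := lt_of_lt_of_le hn₀ (by exact_mod_cast le_trans (Nat.le_add_right _ _) hm)
          exact neg_lt_of_abs_lt this
        · have : |t| < (m:ℝ) := lt_of_lt_of_le hn₀ (by exact_mod_cast le_trans (Nat.le_add_right _ _) hm)
          exact lt_of_abs_lt this
        · show w t ≤ ((m:ℕ) : ℝ≥0∞)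
          refine le_trans hn₁.le ?_
          exact_mod_cast le_trans (Nat.le_add_left _ _) hm
      rcases eq_or_ne (w t) 0 with hw0 | hw0
      · simp [hw0]
      rcases eq_or_ne (Φ t) ∞ with hΦT | hΦT
      · -- sup is infinite
        have hS : ∀ m : ℕ, n₀ + n₁ + 1 ≤ m → (m:ℝ≥0∞) * w t ≤ ⨆ k, ψ k t := by
          intro m hm
          refine le_iSup_of_le m ?_
          show (m:ℝ≥0∞) * w t ≤ (En m).indicator (fun t => (min (Φ t) m) ^ q * w t) t
          rw [Set.indicator_of_mem (hmem m (le_trans (Nat.le_succ _) hm))]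

          refine mul_le_mul_left ?_ _
          rw [hΦT, min_eq_right le_top]
          calc (m:ℝ≥0∞) = (m:ℝ≥0∞) ^ (1:ℝ) := (ENNReal.rpow_one _).symm
            _ ≤ (m:ℝ≥0∞) ^ q := ENNReal.rpow_le_rpow_of_exponent_le
                (by exact_mod_cast le_trans (Nat.le_add_left 1 _) hm) hq
        by_contra hlt
        push_neg at hlt
        have hSne : (⨆ k, ψ k t) ≠ ∞ := ne_top_of_lt hlt
        have hdiv : (⨆ k, ψ k t) / w t ≠ ∞ :=
          (ENNReal.div_lt_top hSne hw0).ne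
        obtain ⟨M, hM⟩ := ENNReal.exists_nat_gt hdiv
        have hMle : ((M + (n₀ + n₁ + 1) : ℕ) : ℝ≥0∞) ≤ (⨆ k, ψ k t) / w t := by
          rw [ENNReal.le_div_iff_mul_le (Or.inl hw0) (Or.inl hwt)]
          exact hS _ (Nat.le_add_left _ _)
        have : ((M:ℕ) : ℝ≥0∞) ≤ (⨆ k, ψ k t) / w t :=
          le_trans (by exact_mod_cast Nat.le_add_right M _) hMle
        exact absurd (lt_of_lt_of_le hM this) (lt_irrefl _)
      · obtain ⟨n₂, hn₂⟩ := ENNReal.exists_nat_gt hΦT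
        refine le_iSup_of_le (n₀ + n₁ + n₂) ?_
        show Φ t ^ q * w t ≤
          (En (n₀+n₁+n₂)).indicator (fun t => (min (Φ t) (n₀+n₁+n₂ : ℕ)) ^ q * w t) t
        rw [Set.indicator_of_mem (hmem _ (Nat.le_add_right _ _))]
        rw [min_eq_left]
        exact le_trans hn₂.le (by exact_mod_cast Nat.le_add_left _ _)
    calc (∫⁻ t in E, Φ t ^ q * w t) ≤ ∫⁻ t in E, ⨆ n, ψ n t := lintegral_mono_ae hae
      _ = ⨆ n, ∫⁻ t in E, ψ n t := lintegral_iSup hψm hψmono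
      _ = ⨆ n, It n := by
          refine iSup_congr fun n => ?_
          rw [hItψ n]
  have hfinal : (∫⁻ t in E, Φ t ^ q * w t) ≤ J ^ q :=
    le_trans hsup (iSup_le hIq)
  calc (∫⁻ t in EIoo a b, (∫⁻ s in EIoo a (t:EReal), f s) ^ q * w t) ^ (1/q)
      = (∫⁻ t in E, Φ t ^ q * w t) ^ (1/q) := rfl
    _ ≤ (J ^ q) ^ (1/q) := ENNReal.rpow_le_rpow hfinal (by positivity)
    _ = J := by rw [← ENNReal.rpow_mul, mul_one_div_cancel hq0.ne', ENNReal.rpow_one]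

end AuxLemmas

/-- sufficiency in the convex case `p = 1 ≤ q < ∞`: if `A_ε < ∞`, then
the Hardy inequality holds with constant `c · A_ε`, `c` depending only on `q, ε`. -/
theorem stmt3 (q ε : ℝ) (hq : 1 ≤ q) (hε : 0 < ε) :
    ∃ c : ℝ≥0∞, 0 < c ∧ c ≠ ∞ ∧
      ∀ (a b : EReal), a < b →
        ∀ v w : ℝ → ℝ≥0∞, IsWeight a b v → IsWeight a b w →
          AFin a b q ε (V1 a v) w →
            ∀ f : ℝ → ℝ≥0∞, Measurable f →
              (∫⁻ t in EIoo a b, (∫⁻ s in EIoo a (t : EReal), f s) ^ q * w t) ^ (1 / q)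
                ≤ c * Aeps a b q ε (V1 a v) w * ∫⁻ x in EIoo a b, f x * v x := by
  refine ⟨(2:ℝ≥0∞) ^ (ε + 1/q), ENNReal.rpow_pos (by norm_num) (by norm_num),
    ENNReal.rpow_ne_top_of_nonneg (by positivity) (by norm_num), ?_⟩
  intro a b hab v w hv hw hA f hf
  have hq0 : (0:ℝ) < q := lt_of_lt_of_le one_pos hq
  have hVfin : ∀ u ∈ EIoo a b, V1 a v u ≠ ∞ := fun u hu => (hA.1 u hu).1
  have hAne : Aeps a b q ε (V1 a v) w ≠ ∞ := hA.2
  -- a.e. bound for the tail integral of w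
  have haeB : ∀ᵐ (s : ℝ) ∂(volume.restrict (EIoo a b)),
      (∫⁻ u in EIoo (s:EReal) b, w u) ≤
        (Aeps a b q ε (V1 a v) w) ^ q * (2 ^ (q*ε) * 2) * (v s) ^ q := by
    filter_upwards [ae_inv_le_V1 (a := a) (b := b) (v := v),
      ae_restrict_mem (measurableSet_EIoo a b)] with s hs hsmem
    refine lintegral_finalSeg hsmem.2 ?_
    intro r hsr hrb
    have hrmem : (r:ℝ) ∈ EIoo a b := ⟨lt_trans hsmem.1 (EReal.coe_lt_coe_iff.2 hsr), hrb⟩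
    refine le_trans (tail_bound hq hε hv hw.1 hVfin hrmem) ?_
    refine mul_le_mul_right ?_ _
    have h1 : (v s)⁻¹ ≤ V1 a v r := hs r hsr hrb
    have h2 : (V1 a v r)⁻¹ ≤ v s := by
      rw [← inv_inv (v s)]
      exact ENNReal.inv_le_inv.2 h1
    calc ((V1 a v r) ^ q)⁻¹ = ((V1 a v r)⁻¹) ^ q := (ENNReal.inv_rpow _ _).symm
      _ ≤ (v s) ^ q := ENNReal.rpow_le_rpow h2 hq0.le
  have hwfin : ∀ᵐ t ∂(volume.restrict (EIoo a b)), w t ≠ ∞ := by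
    filter_upwards [hw.2] with t ht
    exact ht.2
  refine le_trans (minkowski_hardy hq hf hw.1 hwfin) ?_
  have hcA : (2:ℝ≥0∞) ^ (ε + 1/q) * Aeps a b q ε (V1 a v) w ≠ ∞ :=
    ENNReal.mul_ne_top (ENNReal.rpow_ne_top_of_nonneg (by positivity) (by norm_num)) hAne
  have hb2 : ∀ᵐ (s : ℝ) ∂(volume.restrict (EIoo a b)),
      f s * (∫⁻ u in EIoo (s:EReal) b, w u) ^ (1/q) ≤
        ((2:ℝ≥0∞) ^ (ε + 1/q) * Aeps a b q ε (V1 a v) w) * (f s * v s) := by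
    filter_upwards [haeB] with s hsB
    have halg : ((Aeps a b q ε (V1 a v) w) ^ q * (2 ^ (q*ε) * 2) * (v s) ^ q) ^ (1/q) =
        (2:ℝ≥0∞) ^ (ε + 1/q) * Aeps a b q ε (V1 a v) w * v s := by
      have e0 : (2:ℝ≥0∞) ^ (q*ε) * 2 = 2 ^ (q*ε + 1) := by
        rw [ENNReal.rpow_add _ _ (by norm_num) (by norm_num), ENNReal.rpow_one]
      rw [e0, ENNReal.mul_rpow_of_nonneg _ _ (by positivity),
        ENNReal.mul_rpow_of_nonneg _ _ (by positivity), ← ENNReal.rpow_mul,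
        ← ENNReal.rpow_mul, ← ENNReal.rpow_mul,
        mul_one_div_cancel hq0.ne', ENNReal.rpow_one, ENNReal.rpow_one,
        show (q*ε + 1) * (1/q) = ε + 1/q by field_simp]
      ring
    have h1 : (∫⁻ u in EIoo (s:EReal) b, w u) ^ (1/q) ≤
        (2:ℝ≥0∞) ^ (ε + 1/q) * Aeps a b q ε (V1 a v) w * v s := by
      rw [← halg]
      exact ENNReal.rpow_le_rpow hsB (by positivity)
    calc f s * (∫⁻ u in EIoo (s:EReal) b, w u) ^ (1/q)
        ≤ f s * ((2:ℝ≥0∞) ^ (ε + 1/q) * Aeps a b q ε (V1 a v) w * v s) :=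
          mul_le_mul_right h1 _
      _ = ((2:ℝ≥0∞) ^ (ε + 1/q) * Aeps a b q ε (V1 a v) w) * (f s * v s) := by ring
  calc (∫⁻ s in EIoo a b, f s * (∫⁻ u in EIoo (s:EReal) b, w u) ^ (1/q))
      ≤ ∫⁻ s in EIoo a b,
          ((2:ℝ≥0∞) ^ (ε + 1/q) * Aeps a b q ε (V1 a v) w) * (f s * v s) :=
        lintegral_mono_ae hb2
    _ = ((2:ℝ≥0∞) ^ (ε + 1/q) * Aeps a b q ε (V1 a v) w) * ∫⁻ s in EIoo a b, f s * v s :=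
        lintegral_const_mul' _ _ hcA
    _ = (2:ℝ≥0∞) ^ (ε + 1/q) * Aeps a b q ε (V1 a v) w * ∫⁻ x in EIoo a b, f x * v x := rfl
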